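/- If G is a disconnected graph with exactly two connected components G₁ and G₂, then every mutual-visibility set of G is contained entirely in one component, and consequently the visibility polynomial satisfies V(G) = V(G₁) + V(G₂) − 1. -/

import Mathlib

open SimpleGraph Polynomial

/-- Two vertices `u`, `v` are `X`-visible in `G` if some shortest `u`\u2013`v` path
has no internal vertex in `X`. -/
def SimpleGraph.XVisible {V : Type*} (G : SimpleGraph V) (X : Set V) (u v : V) : Prop :=
  ∃ p : G.Walk u v, p.IsPath ∧ p.length = G.dist u v ∧
    ∀ w ∈ p.support, w ∈ X → w = u ∨ w = v

/-- `X` is a mutual-visibility set of `G`. -/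
def SimpleGraph.IsMutualVisibilitySet {V : Type*} (G : SimpleGraph V) (X : Set V) : Prop :=
  ∀ u ∈ X, ∀ v ∈ X, G.XVisible X u v


open scoped Classical in
/-- The visibility polynomial `∑ r_i x^i`, where `r_i` is the number of
mutual-visibility sets of cardinality `i`. -/
noncomputable def visPoly {V : Type*} (G : SimpleGraph V) [Fintype V] : Polynomial ℤ :=
  ∑ X : Finset V, if G.IsMutualVisibilitySet ↑X then (Polynomial.X ^ X.card : Polynomial ℤ) else 0

section Aux

variable {α β : Type*} {G : SimpleGraph α} {H : SimpleGraph β}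

/-- The inclusion of `G` into `G ⊕g H` as a graph hom with coercion `Sum.inl`. -/
def auxInlHom (G : SimpleGraph α) (H : SimpleGraph β) : G →g G ⊕g H :=
  ⟨Sum.inl, fun h => h⟩

/-- The inclusion of `H` into `G ⊕g H` as a graph hom with coercion `Sum.inr`. -/
def auxInrHom (G : SimpleGraph α) (H : SimpleGraph β) : H →g G ⊕g H :=
  ⟨Sum.inr, fun h => h⟩

@[simp] lemma auxInlHom_coe : ⇑(auxInlHom G H) = Sum.inl := rfl
@[simp] lemma auxInrHom_coe : ⇑(auxInrHom G H) = Sum.inr := rfl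

lemma auxInlHom_inj : Function.Injective ⇑(auxInlHom G H) := by
  rw [auxInlHom_coe]; exact Sum.inl_injective

lemma auxInrHom_inj : Function.Injective ⇑(auxInrHom G H) := by
  rw [auxInrHom_coe]; exact Sum.inr_injective

lemma aux_isLeft_of_walk : ∀ {x y : α ⊕ β}, (G ⊕g H).Walk x y → x.isLeft → y.isLeft := by
  intro x y p
  induction p with
  | nil => exact id
  | @cons x b y h p ih =>
    intro hx
    apply ih
    cases x <;> cases b <;> simp_all [SimpleGraph.sum]

lemma aux_exists_walk_map_inl : ∀ {x y : α ⊕ β} (p : (G ⊕g H).Walk x y) (u v : α)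
    (hu : x = Sum.inl u) (hv : y = Sum.inl v),
    ∃ q : G.Walk u v, q.map (auxInlHom G H) = p.copy hu hv := by
  intro x y p
  induction p with
  | nil =>
    intro u v hu hv
    subst hu
    obtain rfl : u = v := Sum.inl_injective hv
    exact ⟨Walk.nil, by simp⟩
  | @cons x b y h p ih =>
    intro u v hu hv
    subst hu
    subst hv
    cases b with
    | inr b => simp [SimpleGraph.sum] at h
    | inl b =>
      obtain ⟨q, hq⟩ := ih b v rfl rfl
      rw [Walk.copy_rfl_rfl] at hq
      have hG : G.Adj u b := h
      refine ⟨Walk.cons hG q, ?_⟩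
      rw [Walk.copy_rfl_rfl, Walk.map_cons, hq]
      rfl

lemma aux_exists_walk_map_inr : ∀ {x y : α ⊕ β} (p : (G ⊕g H).Walk x y) (u v : β)
    (hu : x = Sum.inr u) (hv : y = Sum.inr v),
    ∃ q : H.Walk u v, q.map (auxInrHom G H) = p.copy hu hv := by
  intro x y p
  induction p with
  | nil =>
    intro u v hu hv
    subst hu
    obtain rfl : u = v := Sum.inr_injective hv
    exact ⟨Walk.nil, by simp⟩
  | @cons x b y h p ih =>
    intro u v hu hv
    subst hu
    subst hv
    cases b with
    | inl b => simp [SimpleGraph.sum] at h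
    | inr b =>
      obtain ⟨q, hq⟩ := ih b v rfl rfl
      rw [Walk.copy_rfl_rfl] at hq
      have hG : H.Adj u b := h
      refine ⟨Walk.cons hG q, ?_⟩
      rw [Walk.copy_rfl_rfl, Walk.map_cons, hq]
      rfl

lemma aux_dist_inl (h₁ : G.Connected) (u v : α) :
    (G ⊕g H).dist (Sum.inl u) (Sum.inl v) = G.dist u v := by
  apply le_antisymm
  · obtain ⟨p, hp⟩ := h₁.exists_walk_length_eq_dist u v
    calc (G ⊕g H).dist (Sum.inl u) (Sum.inl v)
        ≤ (p.map (auxInlHom G H)).length := SimpleGraph.dist_le _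
      _ = G.dist u v := by rw [Walk.length_map, hp]
  · have hr : (G ⊕g H).Reachable (Sum.inl u) (Sum.inl v) :=
      ⟨(h₁ u v).some.map (auxInlHom G H)⟩
    obtain ⟨p, hp⟩ := hr.exists_walk_length_eq_dist
    obtain ⟨q, hq⟩ := aux_exists_walk_map_inl p u v rfl rfl
    rw [Walk.copy_rfl_rfl] at hq
    calc G.dist u v ≤ q.length := SimpleGraph.dist_le q
      _ = p.length := by rw [← hq]; exact (Walk.length_map (f := auxInlHom G H) (p := q)).symm
      _ = _ := hp

lemma aux_dist_inr (h₂ : H.Connected) (u v : β) :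
    (G ⊕g H).dist (Sum.inr u) (Sum.inr v) = H.dist u v := by
  apply le_antisymm
  · obtain ⟨p, hp⟩ := h₂.exists_walk_length_eq_dist u v
    calc (G ⊕g H).dist (Sum.inr u) (Sum.inr v)
        ≤ (p.map (auxInrHom G H)).length := SimpleGraph.dist_le _
      _ = H.dist u v := by rw [Walk.length_map, hp]
  · have hr : (G ⊕g H).Reachable (Sum.inr u) (Sum.inr v) :=
      ⟨(h₂ u v).some.map (auxInrHom G H)⟩
    obtain ⟨p, hp⟩ := hr.exists_walk_length_eq_dist
    obtain ⟨q, hq⟩ := aux_exists_walk_map_inr p u v rfl rfl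
    rw [Walk.copy_rfl_rfl] at hq
    calc H.dist u v ≤ q.length := SimpleGraph.dist_le q
      _ = p.length := by rw [← hq]; exact (Walk.length_map (f := auxInrHom G H) (p := q)).symm
      _ = _ := hp

lemma aux_mv_inl_iff (h₁ : G.Connected) (S : Set α) :
    (G ⊕g H).IsMutualVisibilitySet (Sum.inl '' S) ↔ G.IsMutualVisibilitySet S := by
  constructor
  · intro hmv u hu v hv
    obtain ⟨p, hpath, hlen, hsup⟩ :=
      hmv (Sum.inl u) ⟨u, hu, rfl⟩ (Sum.inl v) ⟨v, hv, rfl⟩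
    obtain ⟨q, hq⟩ := aux_exists_walk_map_inl p u v rfl rfl
    rw [Walk.copy_rfl_rfl] at hq
    subst hq
    refine ⟨q, (Walk.map_isPath_iff_of_injective auxInlHom_inj).mp hpath, ?_, ?_⟩
    · rw [← aux_dist_inl (H := H) h₁, ← hlen]; exact (Walk.length_map (f := auxInlHom G H) (p := q)).symm
    · intro w hw hwS
      have hmem : Sum.inl w ∈ (q.map (auxInlHom G H)).support := by
        rw [Walk.support_map, auxInlHom_coe]
        exact List.mem_map_of_mem hw
      rcases hsup (Sum.inl w) hmem ⟨w, hwS, rfl⟩ with h | h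
      · exact Or.inl (Sum.inl_injective h)
      · exact Or.inr (Sum.inl_injective h)
  · intro hmv x hx y hy
    obtain ⟨u, hu, rfl⟩ := hx
    obtain ⟨v, hv, rfl⟩ := hy
    obtain ⟨q, hpath, hlen, hsup⟩ := hmv u hu v hv
    refine ⟨q.map (auxInlHom G H),
      Walk.map_isPath_of_injective auxInlHom_inj hpath, ?_, ?_⟩
    · refine (Walk.length_map (f := auxInlHom G H) (p := q)).trans ?_; rw [hlen, aux_dist_inl (H := H) h₁]
    · intro w hw hwX
      replace hw : w ∈ q.support.map Sum.inl := by rw [← auxInlHom_coe (G := G) (H := H), ← Walk.support_map]; exact hw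
      obtain ⟨w', hw', rfl⟩ := List.mem_map.mp hw
      obtain ⟨s, hs, hse⟩ := hwX
      have hws : w' ∈ S := Sum.inl_injective hse ▸ hs
      rcases hsup w' hw' hws with h | h
      · exact Or.inl (by rw [h])
      · exact Or.inr (by rw [h])

lemma aux_mv_inr_iff (h₂ : H.Connected) (S : Set β) :
    (G ⊕g H).IsMutualVisibilitySet (Sum.inr '' S) ↔ H.IsMutualVisibilitySet S := by
  constructor
  · intro hmv u hu v hv
    obtain ⟨p, hpath, hlen, hsup⟩ :=
      hmv (Sum.inr u) ⟨u, hu, rfl⟩ (Sum.inr v) ⟨v, hv, rfl⟩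
    obtain ⟨q, hq⟩ := aux_exists_walk_map_inr p u v rfl rfl
    rw [Walk.copy_rfl_rfl] at hq
    subst hq
    refine ⟨q, (Walk.map_isPath_iff_of_injective auxInrHom_inj).mp hpath, ?_, ?_⟩
    · rw [← aux_dist_inr (G := G) h₂, ← hlen]; exact (Walk.length_map (f := auxInrHom G H) (p := q)).symm
    · intro w hw hwS
      have hmem : Sum.inr w ∈ (q.map (auxInrHom G H)).support := by
        rw [Walk.support_map, auxInrHom_coe]
        exact List.mem_map_of_mem hw
      rcases hsup (Sum.inr w) hmem ⟨w, hwS, rfl⟩ with h | h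
      · exact Or.inl (Sum.inr_injective h)
      · exact Or.inr (Sum.inr_injective h)
  · intro hmv x hx y hy
    obtain ⟨u, hu, rfl⟩ := hx
    obtain ⟨v, hv, rfl⟩ := hy
    obtain ⟨q, hpath, hlen, hsup⟩ := hmv u hu v hv
    refine ⟨q.map (auxInrHom G H),
      Walk.map_isPath_of_injective auxInrHom_inj hpath, ?_, ?_⟩
    · refine (Walk.length_map (f := auxInrHom G H) (p := q)).trans ?_; rw [hlen, aux_dist_inr (G := G) h₂]
    · intro w hw hwX
      replace hw : w ∈ q.support.map Sum.inr := by rw [← auxInrHom_coe (G := G) (H := H), ← Walk.support_map]; exact hw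
      obtain ⟨w', hw', rfl⟩ := List.mem_map.mp hw
      obtain ⟨s, hs, hse⟩ := hwX
      have hws : w' ∈ S := Sum.inr_injective hse ▸ hs
      rcases hsup w' hw' hws with h | h
      · exact Or.inl (by rw [h])
      · exact Or.inr (by rw [h])

lemma aux_part1 {X : Set (α ⊕ β)} (hX : (G ⊕g H).IsMutualVisibilitySet X) :
    (∀ v ∈ X, v.isLeft) ∨ (∀ v ∈ X, v.isRight) := by
  by_cases h : ∀ v ∈ X, v.isLeft
  · exact Or.inl h
  · push_neg at h
    obtain ⟨x, hx, hxl⟩ := h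
    obtain ⟨b, rfl⟩ : ∃ b, x = Sum.inr b := by
      cases x with
      | inl a => simp at hxl
      | inr b => exact ⟨b, rfl⟩
    right
    intro w hw
    cases w with
    | inr _ => rfl
    | inl a =>
      exfalso
      obtain ⟨p, -, -, -⟩ := hX (Sum.inl a) hw (Sum.inr b) hx
      simpa using aux_isLeft_of_walk p rfl

end Aux

theorem visPoly_two_components {α β : Type*} [Fintype α] [Fintype β]
    [Nonempty α] [Nonempty β] (G₁ : SimpleGraph α) (G₂ : SimpleGraph β)
    (h₁ : G₁.Connected) (h₂ : G₂.Connected) :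
    (∀ X : Set (α ⊕ β), (G₁ ⊕g G₂).IsMutualVisibilitySet X →
      (∀ v ∈ X, v.isLeft) ∨ (∀ v ∈ X, v.isRight)) ∧
    visPoly (G₁ ⊕g G₂) = visPoly G₁ + visPoly G₂ - 1 := by
  classical
  refine ⟨fun X hX => aux_part1 hX, ?_⟩
  set f : Finset (α ⊕ β) → Polynomial ℤ := fun A =>
    if (G₁ ⊕g G₂).IsMutualVisibilitySet ↑A then (Polynomial.X ^ A.card : Polynomial ℤ) else 0
    with hf
  have hvis : visPoly (G₁ ⊕g G₂) = ∑ A : Finset (α ⊕ β), f A := by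
    rw [visPoly]
  set L : Finset (Finset (α ⊕ β)) :=
    Finset.univ.image (fun A : Finset α => A.map Function.Embedding.inl) with hL
  set R : Finset (Finset (α ⊕ β)) :=
    Finset.univ.image (fun B : Finset β => B.map Function.Embedding.inr) with hR
  have hzero : ∀ A ∈ (Finset.univ : Finset (Finset (α ⊕ β))), A ∉ L ∪ R → f A = 0 := by
    intro A _ hA
    rw [hf]
    simp only
    rw [if_neg]
    intro hmv
    apply hA
    rcases aux_part1 hmv with h | h
    · apply Finset.mem_union_left
      rw [hL]
      refine Finset.mem_image.mpr ⟨A.toLeft, Finset.mem_univ _, ?_⟩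
      ext x
      cases x with
      | inl a => simp
      | inr b =>
        simp only [Finset.mem_map, Finset.mem_toLeft, Function.Embedding.inl_apply]
        constructor
        · rintro ⟨a, -, h'⟩; exact absurd h' (by simp)
        · intro hb; exact absurd (h _ hb) (by simp)
    · apply Finset.mem_union_right
      rw [hR]
      refine Finset.mem_image.mpr ⟨A.toRight, Finset.mem_univ _, ?_⟩
      ext x
      cases x with
      | inr b => simp
      | inl a =>
        simp only [Finset.mem_map, Finset.mem_toRight, Function.Embedding.inr_apply]
        constructor
        · rintro ⟨b, -, h'⟩; exact absurd h' (by simp)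
        · intro ha; exact absurd (h _ ha) (by simp)
  have hsub : L ∪ R ⊆ Finset.univ := Finset.subset_univ _
  have hstep1 : ∑ A : Finset (α ⊕ β), f A = ∑ A ∈ L ∪ R, f A :=
    (Finset.sum_subset hsub hzero).symm
  have hinter : L ∩ R = {∅} := by
    ext A
    simp only [Finset.mem_inter, Finset.mem_singleton]
    constructor
    · rintro ⟨hAL, hAR⟩
      obtain ⟨C, -, rfl⟩ := Finset.mem_image.mp hAL
      obtain ⟨D, -, hD⟩ := Finset.mem_image.mp hAR
      rw [Finset.eq_empty_iff_forall_notMem]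
      intro x hx
      obtain ⟨a, -, rfl⟩ := Finset.mem_map.mp hx
      rw [← hD] at hx
      obtain ⟨b, -, hb⟩ := Finset.mem_map.mp hx
      exact absurd hb (by simp)
    · rintro rfl
      constructor
      · exact Finset.mem_image.mpr ⟨∅, Finset.mem_univ _, by simp⟩
      · exact Finset.mem_image.mpr ⟨∅, Finset.mem_univ _, by simp⟩
  have hempty : f ∅ = 1 := by
    rw [hf]
    simp only [Finset.coe_empty, Finset.card_empty, pow_zero]
    rw [if_pos]
    intro u hu
    simp at hu
  have hstep2 : ∑ A ∈ L ∪ R, f A + ∑ A ∈ L ∩ R, f A = ∑ A ∈ L, f A + ∑ A ∈ R, f A :=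
    Finset.sum_union_inter
  have hLsum : ∑ A ∈ L, f A = visPoly G₁ := by
    rw [hL, Finset.sum_image (fun A _ B _ h => Finset.map_injective _ h), visPoly]
    refine Finset.sum_congr rfl fun A _ => ?_
    rw [hf]
    simp only [Finset.card_map]
    congr 1
    rw [eq_iff_iff]
    have hcoe : ((A.map (Function.Embedding.inl (β := β)) : Finset (α ⊕ β)) : Set (α ⊕ β)) = Sum.inl '' ↑A := by
      rw [Finset.coe_map]; rfl
    rw [hcoe]
    exact aux_mv_inl_iff h₁ ↑A
  have hRsum : ∑ A ∈ R, f A = visPoly G₂ := by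
    rw [hR, Finset.sum_image (fun A _ B _ h => Finset.map_injective _ h), visPoly]
    refine Finset.sum_congr rfl fun A _ => ?_
    rw [hf]
    simp only [Finset.card_map]
    congr 1
    rw [eq_iff_iff]
    have hcoe : ((A.map (Function.Embedding.inr (α := α)) : Finset (α ⊕ β)) : Set (α ⊕ β)) = Sum.inr '' ↑A := by
      rw [Finset.coe_map]; rfl
    rw [hcoe]
    exact aux_mv_inr_iff h₂ ↑A
  have hintersum : ∑ A ∈ L ∩ R, f A = 1 := by
    rw [hinter, Finset.sum_singleton, hempty]
  rw [hvis, hstep1, ← hLsum, ← hRsum, ← hstep2, hintersum]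
  ring
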